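/- Let α > 0, let A be a (deterministic) d × d real matrix and λ a probability measure on S^{d−1}. Set c_n = ∫_{S^{d−1}} ‖A^n s‖^α λ(ds) for n ∈ ℕ₀ and assume 0 < Σ_{n≥0} c_n < ∞ (note c₀ = 1). Let Υ be the probability measure on S^{d−1} defined by Υ(f) = (Σ_k c_k)^{−1} Σ_{n≥0} ∫_{S^{d−1}} 1_{{A^n s ≠ 0}} f(A^n s/‖A^n s‖) ‖A^n s‖^α λ(ds) for bounded measurable f, let M₀ ∼ Υ and M₁ = A M₀, and let P be the law of (M₀, M₁). Then P ∈ M_α and the adjoint measure satisfies P*(S × {0}) = λ(S)/(Σ_k c_k) for every Borel set S ⊆ S^{d−1}. -/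

import Mathlib

open MeasureTheory Filter Set
open scoped ENNReal Topology Classical

noncomputable section

/-- `ℝ^d` with the Euclidean norm. -/
abbrev Ed (d : ℕ) : Type := EuclideanSpace ℝ (Fin d)

/-- The unit sphere `S^{d-1}` of `ℝ^d`. -/
def unitSphere (d : ℕ) : Set (Ed d) := Metric.sphere 0 1

/-- `∫ 1_{m ≠ 0} 1_S(m/‖m‖) ‖m‖^α P(ds, dm)`: the mass that `P` sends to the set of
directions `S ⊆ S^{d-1}`, weighted by `‖m‖^α`. -/
def dirMass (d : ℕ) (α : ℝ) (P : Measure (Ed d × Ed d)) (S : Set (Ed d)) : ℝ≥0∞ :=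
  ∫⁻ p, Set.indicator {p : Ed d × Ed d | p.2 ≠ 0 ∧ ‖p.2‖⁻¹ • p.2 ∈ S}
    (fun p => ENNReal.ofReal (‖p.2‖ ^ α)) p ∂P

/-- Membership in the class `M_α` of admissible distributions: probability measures
on `S^{d-1} × ℝ^d` (encoded as measures on `ℝ^d × ℝ^d` whose first marginal is
concentrated on the unit sphere) such that
`∫ 1_{m ≠ 0} 1_S(m/‖m‖) ‖m‖^α P(ds, dm) ≤ P(S × ℝ^d)` for every Borel `S ⊆ S^{d-1}`. -/
structure MemMalpha (d : ℕ) (α : ℝ) (P : Measure (Ed d × Ed d)) : Prop where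
  prob : IsProbabilityMeasure P
  sphere : P {p : Ed d × Ed d | ‖p.1‖ = 1} = 1
  adm : ∀ S : Set (Ed d), MeasurableSet S → S ⊆ unitSphere d →
    dirMass d α P S ≤ P (S ×ˢ (univ : Set (Ed d)))

/-- `Q` is the adjoint measure `P*` of `P ∈ M_α`: a Borel measure on
`S^{d-1} × ℝ^d` satisfying
`P*(S × {0}) = P(S × ℝ^d) − ∫ 1_{m ≠ 0} 1_S(m/‖m‖) ‖m‖^α P(ds, dm)` for Borel
`S ⊆ S^{d-1}`, and
`P*(E) = ∫ 1_{m ≠ 0} 1_E(m/‖m‖, s/‖m‖) ‖m‖^α P(ds, dm)` for Borel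
`E ⊆ S^{d-1} × (ℝ^d \ {0})`. -/
structure IsAdjoint (d : ℕ) (α : ℝ) (P Q : Measure (Ed d × Ed d)) : Prop where
  supp : Q {p : Ed d × Ed d | ‖p.1‖ ≠ 1} = 0
  eq_zero : ∀ S : Set (Ed d), MeasurableSet S → S ⊆ unitSphere d →
    Q (S ×ˢ ({0} : Set (Ed d))) = P (S ×ˢ (univ : Set (Ed d))) - dirMass d α P S
  eq_pos : ∀ E : Set (Ed d × Ed d), MeasurableSet E →
    E ⊆ (unitSphere d) ×ˢ ({0}ᶜ : Set (Ed d)) →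
    Q E = ∫⁻ p, Set.indicator
        {p : Ed d × Ed d | p.2 ≠ 0 ∧ (‖p.2‖⁻¹ • p.2, ‖p.2‖⁻¹ • p.1) ∈ E}
        (fun p => ENNReal.ofReal (‖p.2‖ ^ α)) p ∂P

/-- Borel measurable structure on `d × d` real matrices (entrywise). -/
instance (d : ℕ) : MeasurableSpace (Matrix (Fin d) (Fin d) ℝ) :=
  show MeasurableSpace (Fin d → Fin d → ℝ) from inferInstance

/-- Multiplication of a `d × d` matrix with a vector of `ℝ^d` (Euclidean space). -/
def mulVecE {d : ℕ} (A : Matrix (Fin d) (Fin d) ℝ) (v : Ed d) : Ed d :=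
  (WithLp.equiv 2 (Fin d → ℝ)).symm (A.mulVec ((WithLp.equiv 2 (Fin d → ℝ)) v))

namespace AR1Aux

variable {d : ℕ}

lemma measurable_mulVecE (A : Matrix (Fin d) (Fin d) ℝ) : Measurable (mulVecE A) := by
  have h : mulVecE A = fun v : Ed d =>
      ((WithLp.linearEquiv 2 ℝ (Fin d → ℝ)).symm.toLinearMap.comp
        (A.mulVecLin.comp (WithLp.linearEquiv 2 ℝ (Fin d → ℝ)).toLinearMap)) v := by
    funext v
    simp [mulVecE, Matrix.mulVecLin_apply, WithLp.linearEquiv]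
  rw [h]
  exact (LinearMap.continuous_of_finiteDimensional _).measurable

lemma mulVecE_zero (A : Matrix (Fin d) (Fin d) ℝ) : mulVecE A (0 : Ed d) = 0 := by
  simp [mulVecE]

lemma mulVecE_smul (A : Matrix (Fin d) (Fin d) ℝ) (t : ℝ) (v : Ed d) :
    mulVecE A (t • v) = t • mulVecE A v := by
  simp [mulVecE, Matrix.mulVec_smul]

lemma mulVecE_pow_succ (A : Matrix (Fin d) (Fin d) ℝ) (n : ℕ) (v : Ed d) :
    mulVecE (A ^ (n + 1)) v = mulVecE A (mulVecE (A ^ n) v) := by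
  simp [mulVecE, Matrix.mulVec_mulVec, pow_succ']

lemma mulVecE_one (v : Ed d) :
    mulVecE (1 : Matrix (Fin d) (Fin d) ℝ) v = v := by
  simp [mulVecE, Matrix.one_mulVec]

lemma mulVecE_pow_zero (A : Matrix (Fin d) (Fin d) ℝ) (v : Ed d) :
    mulVecE (A ^ 0) v = v := by
  simp [mulVecE, Matrix.one_mulVec]

/-- The `n`-th term in the defining series of the spectral measure. -/
def I (d : ℕ) (α : ℝ) (A : Matrix (Fin d) (Fin d) ℝ) (lam : Measure (Ed d))
    (n : ℕ) (S : Set (Ed d)) : ℝ≥0∞ :=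
  ∫⁻ s, Set.indicator
    {s : Ed d | mulVecE (A ^ n) s ≠ 0 ∧
      ‖mulVecE (A ^ n) s‖⁻¹ • mulVecE (A ^ n) s ∈ S}
    (fun s => ENNReal.ofReal (‖mulVecE (A ^ n) s‖ ^ α)) s ∂lam

lemma measurableSet_dirSet {S : Set (Ed d)} (hS : MeasurableSet S)
    {B : Ed d → Ed d} (hB : Measurable B) :
    MeasurableSet {u : Ed d | B u ≠ 0 ∧ ‖B u‖⁻¹ • B u ∈ S} := by
  have h : {u : Ed d | B u ≠ 0 ∧ ‖B u‖⁻¹ • B u ∈ S} =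
      (B ⁻¹' {0})ᶜ ∩ ((fun u => ‖B u‖⁻¹ • B u) ⁻¹' S) := by
    ext u; simp [Set.mem_setOf_eq]
  rw [h]
  exact ((hB (measurableSet_singleton 0)).compl).inter ((hB.norm.inv.smul hB) hS)

/-- Abstract pointwise telescoping identity. -/
lemma shift_core {α : ℝ} (hα : 0 < α) (B : Ed d → Ed d)
    (hBsmul : ∀ (t : ℝ) (v : Ed d), B (t • v) = t • B v)
    (S : Set (Ed d)) (m : Ed d) :
    Set.indicator {u : Ed d | B u ≠ 0 ∧ ‖B u‖⁻¹ • B u ∈ S}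
        (fun u => ENNReal.ofReal (‖B u‖ ^ α)) (‖m‖⁻¹ • m) *
      Set.indicator {x : Ed d | x ≠ 0} (fun x => ENNReal.ofReal (‖x‖ ^ α)) m
    = Set.indicator {x : Ed d | B x ≠ 0 ∧ ‖B x‖⁻¹ • B x ∈ S}
        (fun x => ENNReal.ofReal (‖B x‖ ^ α)) m := by
  have hB0 : B 0 = 0 := by
    have h := hBsmul 0 0
    simpa using h
  by_cases hm : m = 0
  · subst hm
    simp [Set.indicator_apply, hB0]
  · have ht : (0:ℝ) < ‖m‖ := norm_pos_iff.mpr hm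
    have hAm : B (‖m‖⁻¹ • m) = ‖m‖⁻¹ • B m := hBsmul _ _
    by_cases hy : B m = 0
    · rw [Set.indicator_of_notMem (fun h => h.1 (by rw [hAm, hy, smul_zero])),
          zero_mul,
          Set.indicator_of_notMem (fun h => h.1 hy)]
    · have hty : ‖m‖⁻¹ • B m ≠ 0 := smul_ne_zero (inv_ne_zero ht.ne') hy
      have hyn : (0:ℝ) < ‖B m‖ := norm_pos_iff.mpr hy
      have hnorm : ‖‖m‖⁻¹ • B m‖ = ‖m‖⁻¹ * ‖B m‖ := by
        rw [norm_smul, Real.norm_eq_abs, abs_of_pos (inv_pos.mpr ht)]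
      have hdir : ‖‖m‖⁻¹ • B m‖⁻¹ • (‖m‖⁻¹ • B m) = ‖B m‖⁻¹ • B m := by
        rw [hnorm, smul_smul]
        congr 1
        field_simp
        try ring
      have hval : (‖m‖⁻¹ * ‖B m‖) ^ α * ‖m‖ ^ α = ‖B m‖ ^ α := by
        rw [← Real.mul_rpow (by positivity) ht.le]
        congr 1
        field_simp
        try ring
      by_cases hSmem : ‖B m‖⁻¹ • B m ∈ S
      · rw [Set.indicator_of_mem
              (show ‖m‖⁻¹ • m ∈ {u : Ed d | B u ≠ 0 ∧ ‖B u‖⁻¹ • B u ∈ S} from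
                ⟨by rw [hAm]; exact hty, by rw [hAm, hdir]; exact hSmem⟩),
            Set.indicator_of_mem (show m ∈ {x : Ed d | x ≠ 0} from hm),
            Set.indicator_of_mem
              (show m ∈ {x : Ed d | B x ≠ 0 ∧ ‖B x‖⁻¹ • B x ∈ S} from ⟨hy, hSmem⟩)]
        rw [hAm, hnorm, ← ENNReal.ofReal_mul (by positivity), hval]
      · rw [Set.indicator_of_notMem
              (fun h => hSmem (by
                obtain ⟨-, h2⟩ := h
                rw [hAm, hdir] at h2
                exact h2)),
            zero_mul,
            Set.indicator_of_notMem (fun h => hSmem h.2)]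

/-- The key pointwise telescoping identity. -/
lemma shift_pointwise {α : ℝ} (hα : 0 < α) (A : Matrix (Fin d) (Fin d) ℝ)
    (n : ℕ) (S : Set (Ed d)) (s : Ed d) :
    Set.indicator {u : Ed d | mulVecE A u ≠ 0 ∧ ‖mulVecE A u‖⁻¹ • mulVecE A u ∈ S}
      (fun u => ENNReal.ofReal (‖mulVecE A u‖ ^ α))
      (‖mulVecE (A ^ n) s‖⁻¹ • mulVecE (A ^ n) s) *
    Set.indicator {s : Ed d | mulVecE (A ^ n) s ≠ 0}
      (fun s => ENNReal.ofReal (‖mulVecE (A ^ n) s‖ ^ α)) s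
    = Set.indicator
        {s : Ed d | mulVecE (A ^ (n + 1)) s ≠ 0 ∧
          ‖mulVecE (A ^ (n + 1)) s‖⁻¹ • mulVecE (A ^ (n + 1)) s ∈ S}
        (fun s => ENNReal.ofReal (‖mulVecE (A ^ (n + 1)) s‖ ^ α)) s := by
  have h := shift_core hα (mulVecE A) (mulVecE_smul A) S (mulVecE (A ^ n) s)
  simp only [mulVecE_pow_succ]
  exact h

/-- The normalized `n`-step direction map. -/
def Tmap (A : Matrix (Fin d) (Fin d) ℝ) (n : ℕ) (s : Ed d) : Ed d :=
  ‖mulVecE (A ^ n) s‖⁻¹ • mulVecE (A ^ n) s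

/-- The `n`-step weight. -/
def wfun (α : ℝ) (A : Matrix (Fin d) (Fin d) ℝ) (n : ℕ) : Ed d → ℝ≥0∞ :=
  Set.indicator {s : Ed d | mulVecE (A ^ n) s ≠ 0}
    (fun s => ENNReal.ofReal (‖mulVecE (A ^ n) s‖ ^ α))

lemma measurable_Tmap (A : Matrix (Fin d) (Fin d) ℝ) (n : ℕ) :
    Measurable (Tmap A n) :=
  ((measurable_mulVecE (A ^ n)).norm.inv).smul (measurable_mulVecE (A ^ n))

lemma measurable_ofReal_norm_rpow {α : ℝ} (hα : 0 ≤ α) {B : Ed d → Ed d}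
    (hB : Measurable B) :
    Measurable fun s => ENNReal.ofReal (‖B s‖ ^ α) :=
  ENNReal.measurable_ofReal.comp ((Real.continuous_rpow_const hα).measurable.comp hB.norm)

lemma measurableSet_ne_zero {B : Ed d → Ed d} (hB : Measurable B) :
    MeasurableSet {s : Ed d | B s ≠ 0} := by
  have h : {s : Ed d | B s ≠ 0} = (B ⁻¹' {0})ᶜ := rfl
  rw [h]
  exact (hB (measurableSet_singleton 0)).compl

lemma measurable_wfun {α : ℝ} (hα : 0 ≤ α) (A : Matrix (Fin d) (Fin d) ℝ) (n : ℕ) :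
    Measurable (wfun α A n) :=
  (measurable_ofReal_norm_rpow hα (measurable_mulVecE (A ^ n))).indicator
    (measurableSet_ne_zero (measurable_mulVecE (A ^ n)))

/-- Integrals against the spectral measure `Υ` decompose into the series. -/
lemma lintegral_Upsilon {α : ℝ} (hα : 0 ≤ α) (A : Matrix (Fin d) (Fin d) ℝ)
    (lam Υ : Measure (Ed d)) (C : ℝ≥0∞)
    (hΥ : ∀ S : Set (Ed d), MeasurableSet S → Υ S = C * ∑' n : ℕ, I d α A lam n S)
    {f : Ed d → ℝ≥0∞} (hf : Measurable f) :
    ∫⁻ s, f s ∂Υ = C * ∑' n : ℕ, ∫⁻ s, f (Tmap A n s) * wfun α A n s ∂lam := by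
  have hUeq : Υ = C • Measure.sum (fun n => (lam.withDensity (wfun α A n)).map (Tmap A n)) := by
    ext S hS
    rw [hΥ S hS, Measure.smul_apply, Measure.sum_apply _ hS, smul_eq_mul]
    congr 1
    refine tsum_congr fun n => ?_
    rw [Measure.map_apply (measurable_Tmap A n) hS,
        withDensity_apply _ ((measurable_Tmap A n) hS),
        ← lintegral_indicator ((measurable_Tmap A n) hS)]
    simp only [I, wfun, Set.indicator_indicator]
    refine lintegral_congr fun s => ?_
    congr 1
    ext u
    simp only [Set.mem_setOf_eq, Set.mem_inter_iff, Set.mem_preimage, Tmap]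
    tauto
  rw [hUeq, lintegral_smul_measure, lintegral_sum_measure]
  congr 1
  refine tsum_congr fun n => ?_
  rw [lintegral_map hf (measurable_Tmap A n),
      lintegral_withDensity_eq_lintegral_mul lam (measurable_wfun hα A n)
        (show Measurable fun a => f (Tmap A n a) from hf.comp (measurable_Tmap A n))]
  exact lintegral_congr fun s => by simp [mul_comm]

end AR1Aux

/-- Example 6.2 (heavy-tailed AR(1)): let `A` be a deterministic `d × d` matrix and
`λ` a probability measure on `S^{d-1}`; set `c n = ∫ ‖Aⁿ s‖^α λ(ds)` and assume
`0 < Σ c n < ∞`.  Let `Υ` be the spectral measure defined by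
`Υ(S) = (Σ c k)⁻¹ Σ_n ∫ 1_{Aⁿ s ≠ 0} 1_S(Aⁿ s / ‖Aⁿ s‖) ‖Aⁿ s‖^α λ(ds)`, let
`M₀ ∼ Υ`, `M₁ = A M₀`, and let `P` be the law of `(M₀, M₁)`.  Then `P ∈ M_α` and
`P*(S × {0}) = λ(S) / Σ c k` for every Borel `S ⊆ S^{d-1}`. -/
theorem ar1_example_adjoint_mass_at_zero
    {d : ℕ} {α : ℝ} (hα : 0 < α)
    (A : Matrix (Fin d) (Fin d) ℝ)
    (lam : Measure (Ed d)) (hlamProb : IsProbabilityMeasure lam)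
    (hlamSphere : lam (unitSphere d) = 1)
    (c : ℕ → ℝ≥0∞)
    (hc : ∀ n : ℕ, c n = ∫⁻ s, ENNReal.ofReal (‖mulVecE (A ^ n) s‖ ^ α) ∂lam)
    (hcpos : 0 < ∑' n : ℕ, c n) (hcfin : ∑' n : ℕ, c n < ∞)
    (Υ : Measure (Ed d))
    (hΥ : ∀ S : Set (Ed d), MeasurableSet S →
      Υ S = (∑' k : ℕ, c k)⁻¹ *
        ∑' n : ℕ, ∫⁻ s, Set.indicator
          {s : Ed d | mulVecE (A ^ n) s ≠ 0 ∧
            ‖mulVecE (A ^ n) s‖⁻¹ • mulVecE (A ^ n) s ∈ S}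
          (fun s => ENNReal.ofReal (‖mulVecE (A ^ n) s‖ ^ α)) s ∂lam) :
    MemMalpha d α (Υ.map fun s => (s, mulVecE A s)) ∧
    ∀ P' : Measure (Ed d × Ed d),
      IsAdjoint d α (Υ.map fun s => (s, mulVecE A s)) P' →
      ∀ S : Set (Ed d), MeasurableSet S → S ⊆ unitSphere d →
        P' (S ×ˢ ({0} : Set (Ed d))) = (∑' k : ℕ, c k)⁻¹ * lam S := by
  classical
  haveI := hlamProb
  have hsum_ne_zero : (∑' k : ℕ, c k) ≠ 0 := hcpos.ne'
  have hsum_ne_top : (∑' k : ℕ, c k) ≠ ∞ := hcfin.ne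
  have hΥ' : ∀ S : Set (Ed d), MeasurableSet S →
      Υ S = (∑' k : ℕ, c k)⁻¹ * ∑' n : ℕ, AR1Aux.I d α A lam n S := hΥ
  have hFmeas : Measurable (fun s : Ed d => (s, mulVecE A s)) :=
    measurable_id.prodMk (AR1Aux.measurable_mulVecE A)
  -- basic facts about the series terms
  have hIuniv : ∀ n : ℕ, AR1Aux.I d α A lam n Set.univ = c n := by
    intro n
    rw [hc n]
    simp only [AR1Aux.I]
    refine lintegral_congr fun s => ?_
    by_cases h : mulVecE (A ^ n) s = 0
    · simp [Set.indicator_apply, h, Real.zero_rpow hα.ne']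
    · simp [Set.indicator_apply, h]
  have hIsphere : ∀ n : ℕ, AR1Aux.I d α A lam n {x : Ed d | ‖x‖ = 1} = c n := by
    intro n
    rw [hc n]
    simp only [AR1Aux.I]
    refine lintegral_congr fun s => ?_
    by_cases h : mulVecE (A ^ n) s = 0
    · simp [Set.indicator_apply, h, Real.zero_rpow hα.ne']
    · have hne : ‖mulVecE (A ^ n) s‖ ≠ 0 := norm_ne_zero_iff.mpr h
      have hno : ‖‖mulVecE (A ^ n) s‖⁻¹ • mulVecE (A ^ n) s‖ = 1 := by
        rw [norm_smul, norm_inv, norm_norm, inv_mul_cancel₀ hne]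
      simp [Set.indicator_apply, h, hno]
  have hIle : ∀ (n : ℕ) (S : Set (Ed d)), AR1Aux.I d α A lam n S ≤ c n := by
    intro n S
    rw [hc n]
    simp only [AR1Aux.I]
    refine lintegral_mono fun s => ?_
    exact Set.indicator_le_self' (fun _ _ => zero_le) s
  have hΥuniv : Υ Set.univ = 1 := by
    rw [hΥ' Set.univ MeasurableSet.univ,
        show (∑' n : ℕ, AR1Aux.I d α A lam n Set.univ) = ∑' n : ℕ, c n from
          tsum_congr hIuniv]
    exact ENNReal.inv_mul_cancel hsum_ne_zero hsum_ne_top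
  haveI hΥprob : IsProbabilityMeasure Υ := ⟨hΥuniv⟩
  have hPprod : ∀ S : Set (Ed d), MeasurableSet S →
      (Υ.map fun s => (s, mulVecE A s)) (S ×ˢ (univ : Set (Ed d))) = Υ S := by
    intro S hS
    rw [Measure.map_apply hFmeas (hS.prod MeasurableSet.univ)]
    congr 1
    ext x
    simp
  -- the dirMass of P in terms of the shifted series
  have hdirMass : ∀ S : Set (Ed d), MeasurableSet S →
      dirMass d α (Υ.map fun s => (s, mulVecE A s)) S
        = (∑' k : ℕ, c k)⁻¹ * ∑' n : ℕ, AR1Aux.I d α A lam (n + 1) S := by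
    intro S hS
    have hpSet : MeasurableSet {p : Ed d × Ed d | p.2 ≠ 0 ∧ ‖p.2‖⁻¹ • p.2 ∈ S} := by
      have h : {p : Ed d × Ed d | p.2 ≠ 0 ∧ ‖p.2‖⁻¹ • p.2 ∈ S}
          = (Prod.snd ⁻¹' {0})ᶜ ∩ ((fun p : Ed d × Ed d => ‖p.2‖⁻¹ • p.2) ⁻¹' S) := rfl
      rw [h]
      exact ((measurable_snd (measurableSet_singleton 0)).compl).inter
        ((measurable_snd.norm.inv.smul measurable_snd) hS)
    have hpfun : Measurable fun p : Ed d × Ed d => ENNReal.ofReal (‖p.2‖ ^ α) :=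
      ENNReal.measurable_ofReal.comp
        ((Real.continuous_rpow_const hα.le).measurable.comp measurable_snd.norm)
    rw [dirMass, lintegral_map (hpfun.indicator hpSet) hFmeas]
    have hGS : ∀ s : Ed d,
        Set.indicator {p : Ed d × Ed d | p.2 ≠ 0 ∧ ‖p.2‖⁻¹ • p.2 ∈ S}
          (fun p => ENNReal.ofReal (‖p.2‖ ^ α)) ((fun s : Ed d => (s, mulVecE A s)) s)
        = Set.indicator
            {u : Ed d | mulVecE A u ≠ 0 ∧ ‖mulVecE A u‖⁻¹ • mulVecE A u ∈ S}
            (fun u => ENNReal.ofReal (‖mulVecE A u‖ ^ α)) s := fun s => rfl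
    rw [lintegral_congr hGS]
    have hGmeas : Measurable (Set.indicator
        {u : Ed d | mulVecE A u ≠ 0 ∧ ‖mulVecE A u‖⁻¹ • mulVecE A u ∈ S}
        (fun u => ENNReal.ofReal (‖mulVecE A u‖ ^ α))) :=
      (AR1Aux.measurable_ofReal_norm_rpow hα.le (AR1Aux.measurable_mulVecE A)).indicator
        (AR1Aux.measurableSet_dirSet hS (AR1Aux.measurable_mulVecE A))
    rw [AR1Aux.lintegral_Upsilon hα.le A lam Υ _ hΥ' hGmeas]
    congr 1
    refine tsum_congr fun n => ?_
    simp only [AR1Aux.I]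
    refine lintegral_congr fun s => ?_
    have := AR1Aux.shift_pointwise hα A n S s
    simpa [AR1Aux.Tmap, AR1Aux.wfun] using this
  constructor
  · refine ⟨?_, ?_, ?_⟩
    · exact Measure.isProbabilityMeasure_map hFmeas.aemeasurable
    · have hset1 : MeasurableSet {p : Ed d × Ed d | ‖p.1‖ = 1} :=
        measurable_fst.norm (measurableSet_singleton 1)
      rw [Measure.map_apply hFmeas hset1]
      have hpre : (fun s : Ed d => (s, mulVecE A s)) ⁻¹' {p : Ed d × Ed d | ‖p.1‖ = 1}
          = {x : Ed d | ‖x‖ = 1} := rfl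
      rw [hpre, hΥ' {x : Ed d | ‖x‖ = 1} (by exact measurable_norm (measurableSet_singleton 1)),
          show (∑' n : ℕ, AR1Aux.I d α A lam n {x : Ed d | ‖x‖ = 1}) = ∑' n : ℕ, c n from
            tsum_congr hIsphere]
      exact ENNReal.inv_mul_cancel hsum_ne_zero hsum_ne_top
    · intro S hS hSsub
      rw [hdirMass S hS, hPprod S hS, hΥ' S hS]
      refine mul_le_mul_right ?_ _
      conv_rhs => rw [tsum_eq_zero_add' (f := fun n : ℕ => AR1Aux.I d α A lam n S)
        ENNReal.summable]
      exact le_add_self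
  · intro P' hP' S hS hSsub
    rw [hP'.eq_zero S hS hSsub, hPprod S hS, hdirMass S hS, hΥ' S hS]
    have hsplit : (∑' n : ℕ, AR1Aux.I d α A lam n S)
        = AR1Aux.I d α A lam 0 S + ∑' n : ℕ, AR1Aux.I d α A lam (n + 1) S :=
      tsum_eq_zero_add' (f := fun n : ℕ => AR1Aux.I d α A lam n S) ENNReal.summable
    rw [hsplit, mul_add]
    have hfin : (∑' k : ℕ, c k)⁻¹ * ∑' n : ℕ, AR1Aux.I d α A lam (n + 1) S ≠ ∞ := by
      refine ENNReal.mul_ne_top (by simp [hsum_ne_zero]) ?_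
      refine ne_top_of_le_ne_top hsum_ne_top ?_
      calc (∑' n : ℕ, AR1Aux.I d α A lam (n + 1) S)
          ≤ ∑' n : ℕ, c (n + 1) := ENNReal.tsum_le_tsum fun n => hIle (n + 1) S
        _ ≤ ∑' n : ℕ, c n := by
            conv_rhs => rw [tsum_eq_zero_add' (f := c) ENNReal.summable]
            exact le_add_self
    rw [ENNReal.add_sub_cancel_right hfin]
    congr 1
    -- `I 0 S = lam S` since `lam` lives on the sphere
    have hmeas1 : MeasurableSet {x : Ed d | ‖x‖ = 1} := by
      exact measurable_norm (measurableSet_singleton 1)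
    have hsphere_eq : unitSphere d = {x : Ed d | ‖x‖ = 1} := by
      ext x
      simp [unitSphere, mem_sphere_zero_iff_norm]
    have hcompl : lam {x : Ed d | ‖x‖ = 1}ᶜ = 0 := by
      rw [measure_compl hmeas1 (measure_ne_top lam _), ← hsphere_eq, hlamSphere, measure_univ]
      simp
    have hae : ∀ᵐ x ∂lam, ‖x‖ = 1 := by
      rw [ae_iff]
      exact hcompl
    simp only [AR1Aux.I]
    have heq : (fun s : Ed d => Set.indicator
        {s : Ed d | mulVecE (A ^ 0) s ≠ 0 ∧
          ‖mulVecE (A ^ 0) s‖⁻¹ • mulVecE (A ^ 0) s ∈ S}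
        (fun s => ENNReal.ofReal (‖mulVecE (A ^ 0) s‖ ^ α)) s)
        =ᵐ[lam] S.indicator 1 := by
      refine hae.mono fun x hx => ?_
      have hx0 : x ≠ 0 := fun h => by simp [h] at hx
      have hxinv : ‖x‖⁻¹ = (1 : ℝ) := by rw [hx]; norm_num
      simp [Set.indicator_apply, AR1Aux.mulVecE_pow_zero, AR1Aux.mulVecE_one, hx0, hxinv,
        hx, Real.one_rpow]
    rw [lintegral_congr_ae heq, lintegral_indicator_one hS]
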